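/- Let (A,B) be a separation of the r-grid W_r (i.e., A∪B = V(W_r) and no edge joins A∖B to B∖A) of order s = |A∩B|, such that B contains all vertices of some cross (the union of a row and a column). Then |A| ≤ s². -/

import Mathlib

/-- The `r`-grid. -/
def gridGraph (r : ℕ) : SimpleGraph (Fin r × Fin r) where
  Adj v w := Nat.dist v.1.val w.1.val + Nat.dist v.2.val w.2.val = 1
  symm := by
    constructor
    intro v w h
    simpa [Nat.dist_comm] using h
  loopless := by
    constructor
    intro v h
    simp [Nat.dist_self] at h

/-- `(A,B)` is a separation of `G`: the two sides cover the vertex set and no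
edge joins `A \ B` to `B \ A`. -/
def IsSeparation {V : Type*} [Fintype V] [DecidableEq V]
    (G : SimpleGraph V) (A B : Finset V) : Prop :=
  A ∪ B = Finset.univ ∧
    ∀ a ∈ A, a ∉ B → ∀ b ∈ B, b ∉ A → ¬ G.Adj a b

/-- `B` contains all vertices of some cross (the union of a row and a column). -/
def ContainsCross {r : ℕ} (B : Finset (Fin r × Fin r)) : Prop :=
  ∃ i j : Fin r, ∀ v : Fin r × Fin r, v.1 = i ∨ v.2 = j → v ∈ B

/-- If `(A,B)` is a separation of the `r`-grid of order `s = |A ∩ B|` whose side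
`B` contains a cross, then `|A| ≤ s²`. -/
theorem small_side_le_order_sq (r : ℕ) (A B : Finset (Fin r × Fin r))
    (hsep : IsSeparation (gridGraph r) A B) (hcross : ContainsCross B) :
    A.card ≤ (A ∩ B).card ^ 2 := by
  classical
  obtain ⟨hcover, hsepn⟩ := hsep
  obtain ⟨i, j, hij⟩ := hcross
  have cover : ∀ v : Fin r × Fin r, v ∈ A ∨ v ∈ B := by
    intro v
    have := Finset.mem_univ v
    rw [← hcover, Finset.mem_union] at this
    exact this
  -- walking along a row from a vertex of A to a vertex of B hits A ∩ B
  have rowKey : ∀ n (a b c : Fin r), Nat.dist b.val c.val ≤ n →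
      (a, b) ∈ A → (a, c) ∈ B → ∃ d : Fin r, (a, d) ∈ A ∩ B := by
    intro n
    induction n with
    | zero =>
      intro a b c hd hA hB
      have hbc : b = c := Fin.ext (Nat.eq_of_dist_eq_zero (Nat.le_zero.mp hd))
      exact ⟨b, Finset.mem_inter.mpr ⟨hA, hbc ▸ hB⟩⟩
    | succ n ih =>
      intro a b c hd hA hB
      by_cases hB0 : (a, b) ∈ B
      · exact ⟨b, Finset.mem_inter.mpr ⟨hA, hB0⟩⟩
      · have hbc : b.val ≠ c.val := by
          intro h
          exact hB0 (Fin.ext h ▸ hB)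
        -- step one towards c
        obtain ⟨b', hb'1, hb'2⟩ : ∃ b' : Fin r, Nat.dist b.val b'.val = 1 ∧
            Nat.dist b'.val c.val ≤ n := by
          rcases lt_or_gt_of_ne hbc with h | h
          · exact ⟨⟨b.val + 1, lt_of_le_of_lt h c.isLt⟩, by simp [Nat.dist],
              by simp [Nat.dist] at hd ⊢; omega⟩
          · have hb0 : 0 < b.val := Nat.pos_of_ne_zero (by omega)
            exact ⟨⟨b.val - 1, lt_of_le_of_lt (Nat.sub_le _ _) b.isLt⟩,
              by simp [Nat.dist]; omega, by simp [Nat.dist] at hd ⊢; omega⟩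
        have hadj : (gridGraph r).Adj (a, b) (a, b') := by
          simp [gridGraph, Nat.dist_self, hb'1]
        rcases cover (a, b') with hA' | hB'
        · exact ih a b' c hb'2 hA' hB
        · by_cases hA2 : (a, b') ∈ A
          · exact ⟨b', Finset.mem_inter.mpr ⟨hA2, hB'⟩⟩
          · exact absurd hadj (hsepn (a, b) hA hB0 (a, b') hB' hA2)
  -- same along a column
  have colKey : ∀ n (a b c : Fin r), Nat.dist b.val c.val ≤ n →
      (b, a) ∈ A → (c, a) ∈ B → ∃ d : Fin r, (d, a) ∈ A ∩ B := by
    intro n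
    induction n with
    | zero =>
      intro a b c hd hA hB
      have hbc : b = c := Fin.ext (Nat.eq_of_dist_eq_zero (Nat.le_zero.mp hd))
      exact ⟨b, Finset.mem_inter.mpr ⟨hA, hbc ▸ hB⟩⟩
    | succ n ih =>
      intro a b c hd hA hB
      by_cases hB0 : (b, a) ∈ B
      · exact ⟨b, Finset.mem_inter.mpr ⟨hA, hB0⟩⟩
      · have hbc : b.val ≠ c.val := by
          intro h
          exact hB0 (Fin.ext h ▸ hB)
        obtain ⟨b', hb'1, hb'2⟩ : ∃ b' : Fin r, Nat.dist b.val b'.val = 1 ∧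
            Nat.dist b'.val c.val ≤ n := by
          rcases lt_or_gt_of_ne hbc with h | h
          · exact ⟨⟨b.val + 1, lt_of_le_of_lt h c.isLt⟩, by simp [Nat.dist],
              by simp [Nat.dist] at hd ⊢; omega⟩
          · have hb0 : 0 < b.val := Nat.pos_of_ne_zero (by omega)
            exact ⟨⟨b.val - 1, lt_of_le_of_lt (Nat.sub_le _ _) b.isLt⟩,
              by simp [Nat.dist]; omega, by simp [Nat.dist] at hd ⊢; omega⟩
        have hadj : (gridGraph r).Adj (b, a) (b', a) := by
          simp [gridGraph, Nat.dist_self, hb'1]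
        rcases cover (b', a) with hA' | hB'
        · exact ih a b' c hb'2 hA' hB
        · by_cases hA2 : (b', a) ∈ A
          · exact ⟨b', Finset.mem_inter.mpr ⟨hA2, hB'⟩⟩
          · exact absurd hadj (hsepn (b, a) hA hB0 (b', a) hB' hA2)
  -- choose, for each v ∈ A, witnesses in A ∩ B sharing its row resp. column
  have hpq : ∀ v : Fin r × Fin r, ∃ p q : Fin r × Fin r, v ∈ A →
      p ∈ A ∩ B ∧ q ∈ A ∩ B ∧ p.1 = v.1 ∧ q.2 = v.2 := by
    intro v
    by_cases hv : v ∈ A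
    · have hvA : (v.1, v.2) ∈ A := by simpa using hv
      have hB1 : (v.1, j) ∈ B := hij (v.1, j) (Or.inr rfl)
      have hB2 : (i, v.2) ∈ B := hij (i, v.2) (Or.inl rfl)
      obtain ⟨d, hd⟩ := rowKey (Nat.dist v.2.val j.val) v.1 v.2 j le_rfl hvA hB1
      obtain ⟨e, he⟩ := colKey (Nat.dist v.1.val i.val) v.2 v.1 i le_rfl hvA hB2
      exact ⟨(v.1, d), (e, v.2), fun _ => ⟨hd, he, rfl, rfl⟩⟩
    · exact ⟨v, v, fun h => absurd h hv⟩
  choose p q hpq using hpq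
  calc A.card ≤ ((A ∩ B) ×ˢ (A ∩ B)).card := by
        apply Finset.card_le_card_of_injOn (fun v => (p v, q v))
        · intro v hv
          obtain ⟨h1, h2, _, _⟩ := hpq v hv
          exact Finset.mem_product.mpr ⟨h1, h2⟩
        · intro v hv w hw h
          obtain ⟨_, _, hp1, hq1⟩ := hpq v hv
          obtain ⟨_, _, hp2, hq2⟩ := hpq w hw
          have h1 : p v = p w := congrArg Prod.fst h
          have h2 : q v = q w := congrArg Prod.snd h
          exact Prod.ext (hp1 ▸ hp2 ▸ congrArg Prod.fst h1)
            (hq1 ▸ hq2 ▸ congrArg Prod.snd h2)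
    _ = (A ∩ B).card ^ 2 := by rw [Finset.card_product, sq]
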